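/- Let p be a prime, let (a_n)_{n≥1} be a sequence of integers, and let f(t) = ∑_{n≥1} a_n t^{n-1} ∈ ℤ[[t]]. Then f^{(p-1)}(t) + f(t)^p ≡ 0 (mod p) as power series if and only if a_{np} ≡ a_n (mod p) for all n ≥ 1. (Equivalently, the p-curvature of the differential equation y' = f·y vanishes mod p exactly when these congruences hold.) -/

import Mathlib

open PowerSeries

private lemma coeff_iter_derivative {R : Type*} [CommRing R] (f : PowerSeries R) (m : ℕ) :
    ∀ k : ℕ, PowerSeries.coeff k ((fun g => PowerSeries.derivative R g)^[m] f)
      = (∏ i ∈ Finset.range m, ((k : R) + 1 + i)) * PowerSeries.coeff (k + m) f := by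
  induction m generalizing f with
  | zero => simp
  | succ m ih =>
    intro k
    rw [Function.iterate_succ_apply, ih (PowerSeries.derivative R f) k,
      PowerSeries.coeff_derivative, Finset.prod_range_succ,
      show k + (m + 1) = k + m + 1 from by omega]
    push_cast
    ring

private lemma coeff_pow_char (p : ℕ) [Fact p.Prime] (F : PowerSeries (ZMod p)) (k : ℕ) :
    PowerSeries.coeff k (F ^ p)
      = if p ∣ k then PowerSeries.coeff (k / p) F else 0 := by
  have hp0 : 0 < p := (Fact.out : p.Prime).pos
  set T : Polynomial (ZMod p) := PowerSeries.trunc (k + 1) F with hT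
  have hdvd : (PowerSeries.X : PowerSeries (ZMod p)) ^ (k + 1) ∣ F - (T : PowerSeries (ZMod p)) := by
    rw [PowerSeries.X_pow_dvd_iff]
    intro m hm
    simp [Polynomial.coeff_coe, PowerSeries.coeff_trunc, hm, hT]
  have hdvd2 : (PowerSeries.X : PowerSeries (ZMod p)) ^ (k + 1) ∣
      F ^ p - (T : PowerSeries (ZMod p)) ^ p :=
    dvd_trans hdvd (sub_dvd_pow_sub_pow _ _ p)
  have h1 : PowerSeries.coeff k (F ^ p)
      = PowerSeries.coeff k ((T : PowerSeries (ZMod p)) ^ p) := by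
    have := (PowerSeries.X_pow_dvd_iff.mp hdvd2) k (Nat.lt_succ_self k)
    rw [map_sub, sub_eq_zero] at this
    exact this
  rw [h1, ← Polynomial.coe_pow, Polynomial.coeff_coe]
  have h2 : T ^ p = Polynomial.expand (ZMod p) p T := by
    rw [← Polynomial.map_frobenius_expand, ZMod.frobenius_zmod, Polynomial.map_id]
  rw [h2, Polynomial.coeff_expand hp0]
  split_ifs with h
  · simp [hT, PowerSeries.coeff_trunc, Nat.lt_succ_of_le (Nat.div_le_self k p)]
  · rfl

private lemma prod_shift (p : ℕ) [Fact p.Prime] (k : ℕ) :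
    (∏ i ∈ Finset.range (p - 1), ((k : ZMod p) + 1 + i))
      = if p ∣ k then -1 else 0 := by
  have hp : p.Prime := Fact.out
  split_ifs with h
  · have hk : (k : ZMod p) = 0 := (ZMod.natCast_eq_zero_iff k p).mpr h
    rw [hk]
    have hcongr : ∀ i ∈ Finset.range (p - 1),
        ((0 : ZMod p) + 1 + (i : ZMod p)) = ((i + 1 : ℕ) : ZMod p) := by
      intro i _; push_cast; ring
    rw [Finset.prod_congr rfl hcongr, ← Nat.cast_prod,
      Finset.prod_range_add_one_eq_factorial]
    exact ZMod.wilsons_lemma p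
  · have hkm : k % p ≠ 0 := fun hc => h (Nat.dvd_iff_mod_eq_zero.mpr hc)
    have hkm2 : k % p < p := Nat.mod_lt k hp.pos
    have hp2 : 2 ≤ p := hp.two_le
    apply Finset.prod_eq_zero (i := p - 1 - k % p)
    · exact Finset.mem_range.mpr (by omega)
    · have hrk : k % p ≤ k := Nat.mod_le k p
      have heq : k + 1 + (p - 1 - k % p) = (k - k % p) + p := by
        generalize k % p = r at hkm hkm2 hrk
        omega
      have : ((k : ZMod p) + 1 + ((p - 1 - k % p : ℕ) : ZMod p))
          = ((k + 1 + (p - 1 - k % p) : ℕ) : ZMod p) := by push_cast; ring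
      rw [this, heq, Nat.cast_add, ZMod.natCast_self,
        (ZMod.natCast_eq_zero_iff _ p).mpr (Nat.dvd_sub_mod k), add_zero]

/-- Let `p` be prime, `(a_n)_{n ≥ 1}` integers and `f(t) = ∑ _{n ≥ 1} a_n t^{n-1} ∈ ℤ[[t]]`.
Then `f^{(p-1)} + f^p ≡ 0 (mod p)` (coefficientwise, as power series) if and only if
`a_{np} ≡ a_n (mod p)` for all `n ≥ 1`; i.e. the `p`-curvature of `y' = f y` vanishes mod `p`
exactly when these congruences hold. -/
theorem p_curvature_vanishes_iff_congruences
    (p : ℕ) (hp : p.Prime) (a : ℕ → ℤ)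
    (f : PowerSeries ℤ) (hf : f = PowerSeries.mk fun k => a (k + 1)) :
    (∀ k : ℕ, (p : ℤ) ∣
        PowerSeries.coeff k ((fun g => PowerSeries.derivative ℤ g)^[p - 1] f + f ^ p)) ↔
      ∀ n : ℕ, 1 ≤ n → a (n * p) ≡ a n [ZMOD p] := by
  haveI : Fact p.Prime := ⟨hp⟩
  have hp1 : 1 ≤ p := hp.pos
  -- key computation of each coefficient mod p
  have key : ∀ k : ℕ,
      (((PowerSeries.coeff k ((fun g => PowerSeries.derivative ℤ g)^[p - 1] f + f ^ p) : ℤ) :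
        ZMod p))
      = if p ∣ k then ((a (k / p + 1) : ZMod p) - (a (k + p) : ZMod p)) else 0 := by
    intro k
    rw [map_add, Int.cast_add]
    -- derivative term
    have hder : (((PowerSeries.coeff k ((fun g => PowerSeries.derivative ℤ g)^[p - 1] f) : ℤ) :
        ZMod p)) = (if p ∣ k then -1 else 0) * (a (k + p) : ZMod p) := by
      rw [coeff_iter_derivative f (p - 1) k]
      have hidx : k + (p - 1) = k + p - 1 := by omega
      have hco : PowerSeries.coeff (k + (p - 1)) f = a (k + p) := by
        rw [hf, PowerSeries.coeff_mk]
        congr 1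
        omega
      rw [hco]
      push_cast
      rw [← prod_shift p k]
    -- power term
    have hpow : (((PowerSeries.coeff k (f ^ p) : ℤ) : ZMod p))
        = if p ∣ k then (a (k / p + 1) : ZMod p) else 0 := by
      have : (((PowerSeries.coeff k (f ^ p) : ℤ) : ZMod p))
          = PowerSeries.coeff k
              ((PowerSeries.map (Int.castRingHom (ZMod p)) f) ^ p) := by
        rw [← map_pow, PowerSeries.coeff_map]
        rfl
      rw [this, coeff_pow_char]
      split_ifs with h
      · rw [PowerSeries.coeff_map, hf, PowerSeries.coeff_mk]
        rfl
      · rfl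
    rw [hder, hpow]
    split_ifs with h
    · ring
    · ring
  constructor
  · intro H n hn
    have hk := key ((n - 1) * p)
    have hdvd : p ∣ (n - 1) * p := dvd_mul_left p (n - 1)
    rw [if_pos hdvd] at hk
    have h0 : (((PowerSeries.coeff ((n - 1) * p)
        ((fun g => PowerSeries.derivative ℤ g)^[p - 1] f + f ^ p) : ℤ) : ZMod p)) = 0 :=
      (ZMod.intCast_zmod_eq_zero_iff_dvd _ p).mpr (H _)
    rw [h0] at hk
    have hdiv : (n - 1) * p / p = n - 1 := Nat.mul_div_cancel _ hp.pos
    have hadd : (n - 1) * p + p = n * p := by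
      conv_rhs => rw [show n = (n - 1) + 1 by omega]
      rw [add_mul, one_mul]
    rw [hdiv, hadd] at hk
    have hn1 : n - 1 + 1 = n := by omega
    rw [hn1] at hk
    have : (a (n * p) : ZMod p) = (a n : ZMod p) := by
      have := hk.symm
      linear_combination -this
    exact (ZMod.intCast_eq_intCast_iff _ _ _).mp this
  · intro H k
    rw [← ZMod.intCast_zmod_eq_zero_iff_dvd, key k]
    split_ifs with h
    · obtain ⟨m, rfl⟩ := h
      have hdiv : p * m / p = m := Nat.mul_div_cancel_left _ hp.pos
      have hadd : p * m + p = (m + 1) * p := by ring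
      rw [hdiv, hadd]
      have := H (m + 1) (by omega)
      rw [← ZMod.intCast_eq_intCast_iff] at this
      rw [this, sub_self]
    · rfl
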